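/- (Convergence of Iteration, Theorem 1.) Suppose that (i) the relative order of the rescalers is unchanged across iterations, i.e. for all i, i' ∈ {1,…,n} and all j, j' ≥ 1, λ^i(j) ≤ λ^{i'}(j) if and only if λ^i(j') ≤ λ^{i'}(j'); and (ii) for all i ≠ i' there exists a coordinate k with M^i_k(1) = 1 and M^{i'}_k(1) = 1 (any two mask supports overlap). Then for every i ∈ {1,…,n} the sequence (δ^i(j))_{j≥1} converges in ℝ^d; i.e., the n delta models converge to a uniquely determined set of n delta models. -/
import Mathlib


open Filter

theorem stmt15
    (n d : ℕ) (hn : 1 ≤ n) (hd : 1 ≤ d)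
    (Δ : ℕ → Fin n → Fin d → ℝ)
    (γ ε U : ℕ → Fin d → ℝ)
    (M : ℕ → Fin n → Fin d → ℝ)
    (lam : ℕ → Fin n → ℝ)
    (hγ : ∀ (j : ℕ) k, γ (j+1) k = Real.sign (∑ i, Δ j i k))
    (hε : ∀ (j : ℕ) k, γ (j+1) k ≠ 0 →
      (∃ i, Real.sign (Δ j i k) = γ (j+1) k ∧ |Δ j i k| = ε (j+1) k) ∧
      (∀ i, Real.sign (Δ j i k) = γ (j+1) k → |Δ j i k| ≤ ε (j+1) k))
    (hε0 : ∀ (j : ℕ) k, γ (j+1) k = 0 → ε (j+1) k = 0)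
    (hU : ∀ (j : ℕ) k, U (j+1) k = γ (j+1) k * ε (j+1) k)
    (hM : ∀ (j : ℕ) i k, M (j+1) i k = if 0 < Δ j i k * U (j+1) k then 1 else 0)
    (hden : ∀ (j : ℕ) i, ∑ k, |M (j+1) i k * U (j+1) k| ≠ 0)
    (hlam : ∀ (j : ℕ) i,
      lam (j+1) i = (∑ k, |Δ j i k|) / (∑ k, |M (j+1) i k * U (j+1) k|))
    (hstep : ∀ (j : ℕ) i k, Δ (j+1) i k = lam (j+1) i * (M (j+1) i k * U (j+1) k))
    (horder : ∀ (i i' : Fin n) (j j' : ℕ), 1 ≤ j → 1 ≤ j' →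
      (lam j i ≤ lam j i' ↔ lam j' i ≤ lam j' i'))
    (hoverlap : ∀ i i' : Fin n, i ≠ i' → ∃ k : Fin d, M 1 i k = 1 ∧ M 1 i' k = 1) :
    ∀ i : Fin n, ∃ L : Fin d → ℝ, Tendsto (fun j => Δ j i) atTop (nhds L) := by
  -- elementary sign facts
  have sign_pos_mul : ∀ (c x : ℝ), 0 < c → Real.sign (c * x) = Real.sign x := by
    intro c x hc
    rcases lt_trichotomy x 0 with h | h | h
    · rw [Real.sign_of_neg h, Real.sign_of_neg (mul_neg_of_pos_of_neg hc h)]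
    · simp [h]
    · rw [Real.sign_of_pos h, Real.sign_of_pos (mul_pos hc h)]
  have sign_mul_abs : ∀ x : ℝ, Real.sign x * |x| = x := by
    intro x
    rcases lt_trichotomy x 0 with h | h | h
    · rw [Real.sign_of_neg h, abs_of_neg h]; ring
    · simp [h]
    · rw [Real.sign_of_pos h, abs_of_pos h]; ring
  -- specializations of hypotheses at the first step (defeq re-typed at literal 1)
  have hM1 : ∀ i k, M 1 i k = if 0 < Δ 0 i k * U 1 k then 1 else 0 := hM 0
  have hU1 : ∀ k, U 1 k = γ 1 k * ε 1 k := hU 0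
  -- masks are 0/1 valued
  have MBIN : ∀ (j : ℕ) i k, M (j+1) i k = 0 ∨ M (j+1) i k = 1 := by
    intro j i k; rw [hM]; split
    · right; rfl
    · left; rfl
  have M1BIN : ∀ i k, M 1 i k = 0 ∨ M 1 i k = 1 := fun i k => MBIN 0 i k
  have absMU : ∀ (j : ℕ) i k, |M (j+1) i k * U (j+1) k| = M (j+1) i k * |U (j+1) k| := by
    intro j i k
    rcases MBIN j i k with h | h <;> rw [h] <;> simp
  -- the ℓ¹ mass of each model is invariant
  set s : Fin n → ℝ := fun i => ∑ k, |Δ 0 i k| with hs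
  have SINV : ∀ (j : ℕ) i, ∑ k, |Δ j i k| = s i := by
    intro j
    induction j with
    | zero => intro i; rfl
    | succ j ih =>
      intro i
      have hlamnn : 0 ≤ lam (j+1) i := by
        rw [hlam]
        exact div_nonneg (Finset.sum_nonneg fun k _ => abs_nonneg _)
          (Finset.sum_nonneg fun k _ => abs_nonneg _)
      calc ∑ k, |Δ (j+1) i k| = ∑ k, lam (j+1) i * |M (j+1) i k * U (j+1) k| := by
            refine Finset.sum_congr rfl fun k _ => ?_
            rw [hstep, abs_mul, abs_of_nonneg hlamnn]
        _ = lam (j+1) i * ∑ k, |M (j+1) i k * U (j+1) k| := by rw [Finset.mul_sum]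
        _ = ∑ k, |Δ j i k| := by rw [hlam, div_mul_cancel₀ _ (hden j i)]
        _ = s i := ih i
  have spos : ∀ i, 0 < s i := by
    intro i
    rcases (Finset.sum_nonneg fun k (_ : k ∈ Finset.univ) => abs_nonneg (Δ 0 i k)).lt_or_eq
      with h | h
    · exact h
    · exfalso
      apply hden 0 i
      have hz : ∀ k, Δ 0 i k = 0 := by
        intro k
        exact abs_eq_zero.mp
          ((Finset.sum_eq_zero_iff_of_nonneg fun k _ => abs_nonneg (Δ 0 i k)).mp h.symm k
            (Finset.mem_univ k))
      refine Finset.sum_eq_zero fun k _ => ?_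
      rw [hM, hz k]
      simp
  have LAMPOS : ∀ (j : ℕ) i, 0 < lam (j+1) i := by
    intro j i
    rw [hlam, SINV]
    exact div_pos (spos i)
      ((Finset.sum_nonneg fun k _ => abs_nonneg _).lt_of_ne (Ne.symm (hden j i)))
  -- coverage: wherever U 1 is nonzero some mask is on
  have COVER : ∀ k, U 1 k ≠ 0 → ∃ i, M 1 i k = 1 := by
    intro k hk
    have hγ1 : γ 1 k ≠ 0 := by
      intro h
      exact hk (by rw [hU1 k, h, zero_mul])
    obtain ⟨⟨i, hsi0, hai0⟩, -⟩ := hε 0 k hγ1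
    have hsi : Real.sign (Δ 0 i k) = γ 1 k := hsi0
    have hai : |Δ 0 i k| = ε 1 k := hai0
    refine ⟨i, ?_⟩
    have hΔ : Δ 0 i k ≠ 0 := by
      intro h; rw [h, Real.sign_zero] at hsi; exact hγ1 hsi.symm
    have hge : γ 1 k * ε 1 k = Δ 0 i k := by rw [← hsi, ← hai, sign_mul_abs]
    rw [hM1 i k, hU1 k, hge, if_pos (mul_self_pos.mpr hΔ)]
  -- key transition lemma together with the structural invariant
  have key : ∀ j : ℕ,
      ((∀ i k, M (j+1) i k = M 1 i k) ∧ (∀ k, ∃ c : ℝ, 0 < c ∧ U (j+1) k = c * U 1 k)) →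
      ((∀ i k, M (j+1+1) i k = M 1 i k) ∧ (∀ k, ∃ c : ℝ, 0 < c ∧ U (j+1+1) k = c * U 1 k)) ∧
      (∀ k, U 1 k ≠ 0 → ∃ i₀, M 1 i₀ k = 1 ∧ U (j+1+1) k = lam (j+1) i₀ * U (j+1) k ∧
        ∀ i, M 1 i k = 1 → lam (j+1) i ≤ lam (j+1) i₀) := by
    intro j hQ
    have PK : ∀ k, (∀ i, M (j+1+1) i k = M 1 i k) ∧ (∃ c : ℝ, 0 < c ∧ U (j+1+1) k = c * U 1 k) ∧
        (U 1 k ≠ 0 → ∃ i₀, M 1 i₀ k = 1 ∧ U (j+1+1) k = lam (j+1) i₀ * U (j+1) k ∧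
          ∀ i, M 1 i k = 1 → lam (j+1) i ≤ lam (j+1) i₀) := by
      intro k
      obtain ⟨c, hc, hUc⟩ := hQ.2 k
      have hΔj : ∀ i, Δ (j+1) i k = lam (j+1) i * M 1 i k * (c * U 1 k) := by
        intro i; rw [hstep j i k, hQ.1 i k, hUc]; ring
      by_cases hk : U 1 k = 0
      · have hΔ0 : ∀ i, Δ (j+1) i k = 0 := fun i => by rw [hΔj, hk]; ring
        have hγ0 : γ (j+1+1) k = 0 := by
          rw [hγ (j+1) k]
          rw [Finset.sum_eq_zero fun i _ => hΔ0 i, Real.sign_zero]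
        have hU0 : U (j+1+1) k = 0 := by rw [hU (j+1) k, hε0 (j+1) k hγ0, mul_zero]
        refine ⟨?_, ⟨1, one_pos, by rw [hU0, hk, mul_zero]⟩, fun h => absurd hk h⟩
        intro i
        rw [hM (j+1) i k, hU0, hM1 i k, hk]
        simp
      · obtain ⟨i₂, hi₂⟩ := COVER k hk
        have hterm : ∀ i, 0 ≤ lam (j+1) i * M 1 i k := by
          intro i
          rcases M1BIN i k with h | h
          · rw [h, mul_zero]
          · rw [h, mul_one]; exact (LAMPOS j i).le
        have hSpos : 0 < ∑ i, lam (j+1) i * M 1 i k := by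
          have h2 : lam (j+1) i₂ * M 1 i₂ k ≤ ∑ i, lam (j+1) i * M 1 i k :=
            Finset.single_le_sum (fun i _ => hterm i) (Finset.mem_univ i₂)
          have h3 : 0 < lam (j+1) i₂ * M 1 i₂ k := by
            rw [hi₂, mul_one]; exact LAMPOS j i₂
          exact lt_of_lt_of_le h3 h2
        have hγs : γ (j+1+1) k = Real.sign (U 1 k) := by
          rw [hγ (j+1) k]
          have hsum : ∑ i, Δ (j+1) i k = ((∑ i, lam (j+1) i * M 1 i k) * c) * U 1 k := by
            rw [Finset.sum_mul, Finset.sum_mul]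
            exact Finset.sum_congr rfl fun i _ => by rw [hΔj i]; ring
          rw [hsum, sign_pos_mul _ _ (mul_pos hSpos hc)]
        have hγne : γ (j+1+1) k ≠ 0 := by
          rw [hγs]
          exact fun h => hk (Real.sign_eq_zero_iff.mp h)
        obtain ⟨⟨i₀, hs0, ha0⟩, hub⟩ := hε (j+1) k hγne
        have hsign : ∀ i, M 1 i k = 1 → Real.sign (Δ (j+1) i k) = Real.sign (U 1 k) := by
          intro i hi
          rw [hΔj, hi, mul_one]
          rw [show lam (j+1) i * (c * U 1 k) = (lam (j+1) i * c) * U 1 k by ring]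
          exact sign_pos_mul _ _ (mul_pos (LAMPOS j i) hc)
        have hM0sign : ∀ i, M 1 i k = 0 → Δ (j+1) i k = 0 := fun i hi => by
          rw [hΔj, hi]; ring
        have hi₀ : M 1 i₀ k = 1 := by
          rcases M1BIN i₀ k with h | h
          · exfalso; apply hγne; rw [← hs0, hM0sign i₀ h, Real.sign_zero]
          · exact h
        have habs : ∀ i, M 1 i k = 1 → |Δ (j+1) i k| = lam (j+1) i * (c * |U 1 k|) := by
          intro i hi
          rw [hΔj, hi, mul_one, abs_mul, abs_mul, abs_of_pos (LAMPOS j i), abs_of_pos hc]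
        have hUj2 : U (j+1+1) k = lam (j+1) i₀ * U (j+1) k := by
          rw [hU (j+1) k, ← ha0, hγs, habs i₀ hi₀, hUc]
          have h1 : Real.sign (U 1 k) * |U 1 k| = U 1 k := sign_mul_abs (U 1 k)
          linear_combination (lam (j+1) i₀ * c) * h1
        have hble : ∀ i, M 1 i k = 1 → lam (j+1) i ≤ lam (j+1) i₀ := by
          intro i hi
          have hle := hub i (by rw [hsign i hi, hγs])
          rw [← ha0, habs i hi, habs i₀ hi₀] at hle
          exact le_of_mul_le_mul_right hle (mul_pos hc (abs_pos.mpr hk))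
        refine ⟨?_, ⟨lam (j+1) i₀ * c, mul_pos (LAMPOS j i₀) hc, by rw [hUj2, hUc]; ring⟩,
          fun _ => ⟨i₀, hi₀, hUj2, hble⟩⟩
        intro i
        rcases M1BIN i k with h | h
        · rw [h, hM (j+1) i k, hM0sign i h]
          simp
        · have hpos : 0 < Δ (j+1) i k * U (j+1+1) k := by
            have e : Δ (j+1) i k * U (j+1+1) k =
                (lam (j+1) i * lam (j+1) i₀ * (c * c)) * (U 1 k * U 1 k) := by
              rw [hΔj i, h, hUj2, hUc]; ring
            rw [e]
            exact mul_pos (mul_pos (mul_pos (LAMPOS j i) (LAMPOS j i₀)) (mul_pos hc hc))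
              (mul_self_pos.mpr hk)
          rw [h, hM (j+1) i k, if_pos hpos]
    exact ⟨⟨fun i k => (PK k).1 i, fun k => (PK k).2.1⟩, fun k => (PK k).2.2⟩
  have Q : ∀ j : ℕ, (∀ i k, M (j+1) i k = M 1 i k) ∧
      (∀ k, ∃ c : ℝ, 0 < c ∧ U (j+1) k = c * U 1 k) := by
    intro j
    induction j with
    | zero => exact ⟨fun i k => rfl, fun k => ⟨1, one_pos, (one_mul _).symm⟩⟩
    | succ j ih => exact (key j ih).1
  have T : ∀ (j : ℕ) k, U 1 k ≠ 0 → ∃ i₀, M 1 i₀ k = 1 ∧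
      U (j+1+1) k = lam (j+1) i₀ * U (j+1) k ∧
      ∀ i, M 1 i k = 1 → lam (j+1) i ≤ lam (j+1) i₀ := fun j => (key j (Q j)).2
  -- the largest-rescaler model
  haveI : Nonempty (Fin n) := ⟨⟨0, hn⟩⟩
  obtain ⟨i₁, -, hmax⟩ := Finset.exists_max_image Finset.univ (lam 1) Finset.univ_nonempty
  have htop : ∀ (j : ℕ) i, lam (j+1) i ≤ lam (j+1) i₁ := fun j i =>
    (horder i i₁ (j+1) 1 (Nat.le_add_left 1 j) le_rfl).mpr (hmax i (Finset.mem_univ i))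
  have M1Une : ∀ i k, M 1 i k = 1 → U 1 k ≠ 0 := by
    intro i k h h0
    rw [hM1 i k, h0, mul_zero] at h
    simp at h
  have UTOP : ∀ (j : ℕ) k, M 1 i₁ k = 1 → U (j+1+1) k = lam (j+1) i₁ * U (j+1) k := by
    intro j k hk1
    obtain ⟨i₀, hi₀, hUeq, hb⟩ := T j k (M1Une i₁ k hk1)
    rw [hUeq, le_antisymm (htop j i₀) (hb i₁ hk1)]
  have DENeq : ∀ (j : ℕ) i, ∑ k, |M (j+1) i k * U (j+1) k| = ∑ k, M 1 i k * |U (j+1) k| := by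
    intro j i
    refine Finset.sum_congr rfl fun k _ => ?_
    rw [absMU, (Q j).1 i k]
  have LAMF : ∀ (j : ℕ) i, lam (j+1) i = s i / (∑ k, M 1 i k * |U (j+1) k|) := by
    intro j i
    rw [hlam, SINV, DENeq]
  have DEN : ∀ (j : ℕ) i, (∑ k, M 1 i k * |U (j+1) k|) ≠ 0 := by
    intro j i
    rw [← DENeq]
    exact hden j i
  have TOP1 : ∀ j : ℕ, lam (j+1+1) i₁ = 1 := by
    intro j
    have hD' : ∑ k, M 1 i₁ k * |U (j+1+1) k| =
        lam (j+1) i₁ * ∑ k, M 1 i₁ k * |U (j+1) k| := by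
      rw [Finset.mul_sum]
      refine Finset.sum_congr rfl fun k _ => ?_
      rcases M1BIN i₁ k with h | h
      · rw [h]; ring
      · rw [h, one_mul, UTOP j k h, abs_mul, abs_of_pos (LAMPOS j i₁), one_mul]
    rw [LAMF (j+1) i₁, hD', LAMF j i₁, div_mul_cancel₀ _ (DEN j i₁),
      div_self (ne_of_gt (spos i₁))]
  have lam_le_one : ∀ (j : ℕ) i, lam (j+1+1) i ≤ 1 := fun j i => (TOP1 j) ▸ htop (j+1) i
  have Umono : ∀ (j : ℕ) k, |U (j+1+1+1) k| ≤ |U (j+1+1) k| := by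
    intro j k
    by_cases hk : U 1 k = 0
    · obtain ⟨c3, -, e3⟩ := (Q (j+1+1)).2 k
      obtain ⟨c2, -, e2⟩ := (Q (j+1)).2 k
      rw [e3, e2, hk, mul_zero, mul_zero]
    · obtain ⟨i₀, -, hUeq, -⟩ := T (j+1) k hk
      rw [hUeq, abs_mul, abs_of_pos (LAMPOS (j+1) i₀)]
      calc lam (j+1+1) i₀ * |U (j+1+1) k| ≤ 1 * |U (j+1+1) k| :=
            mul_le_mul_of_nonneg_right (lam_le_one j i₀) (abs_nonneg _)
        _ = |U (j+1+1) k| := one_mul _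
  -- limits of |U| and U
  set w : Fin d → ℝ := fun k => ⨅ j : ℕ, |U (j+1+1) k| with hw
  have hwten : ∀ k, Tendsto (fun j => |U (j+1+1) k|) atTop (nhds (w k)) := fun k =>
    tendsto_atTop_ciInf (antitone_nat_of_succ_le fun j => Umono j k)
      ⟨0, by rintro x ⟨j, rfl⟩; exact abs_nonneg _⟩
  have wnn : ∀ k, 0 ≤ w k := fun k => le_ciInf fun j => abs_nonneg _
  have hUsign : ∀ (j : ℕ) k, U (j+1+1) k = Real.sign (U 1 k) * |U (j+1+1) k| := by
    intro j k
    obtain ⟨c, hc, e⟩ := (Q (j+1)).2 k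
    rw [e, abs_mul, abs_of_pos hc]
    by_cases hk : U 1 k = 0
    · rw [hk]; simp
    · rw [show Real.sign (U 1 k) * (c * |U 1 k|) = c * (Real.sign (U 1 k) * |U 1 k|) by ring,
        sign_mul_abs]
  have hUten : ∀ k, Tendsto (fun j => U (j+1+1) k) atTop (nhds (Real.sign (U 1 k) * w k)) := by
    intro k
    exact ((hwten k).const_mul (Real.sign (U 1 k))).congr fun j => (hUsign j k).symm
  -- conclusion per model
  intro i
  have hmask1 : ∀ i' : Fin n, ∃ k, M 1 i' k = 1 := by
    intro i'
    by_contra hno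
    push_neg at hno
    apply hden 0 i'
    refine Finset.sum_eq_zero fun k _ => ?_
    rcases M1BIN i' k with h | h
    · rw [show M (0+1) i' k = M 1 i' k from rfl, h, zero_mul, abs_zero]
    · exact absurd h (hno k)
  obtain ⟨k₀, hk₀i, hk₀t⟩ : ∃ k₀, M 1 i k₀ = 1 ∧ M 1 i₁ k₀ = 1 := by
    by_cases hi : i = i₁
    · obtain ⟨k, hk⟩ := hmask1 i₁
      exact ⟨k, hi ▸ hk, hk⟩
    · exact hoverlap i i₁ hi
  have hconst : ∀ j : ℕ, |U (j+1+1) k₀| = |U 2 k₀| := by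
    intro j
    induction j with
    | zero => rfl
    | succ j ih =>
      rw [← ih, UTOP (j+1) k₀ hk₀t, TOP1 j, one_mul]
  have hU2pos : 0 < |U 2 k₀| := by
    have hQ1 : M 2 i k₀ = M 1 i k₀ := (Q 1).1 i k₀
    have hM2 : M 2 i k₀ = 1 := by rw [hQ1]; exact hk₀i
    have hM1' : M 2 i k₀ = if 0 < Δ 1 i k₀ * U 2 k₀ then 1 else 0 := hM 1 i k₀
    rw [hM1'] at hM2
    by_cases hcond : 0 < Δ 1 i k₀ * U 2 k₀
    · refine abs_pos.mpr fun h0 => ?_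
      rw [h0, mul_zero] at hcond
      exact lt_irrefl 0 hcond
    · rw [if_neg hcond] at hM2
      norm_num at hM2
  have hwk₀ : w k₀ = |U 2 k₀| :=
    tendsto_nhds_unique (hwten k₀) (tendsto_const_nhds.congr fun j => (hconst j).symm)
  set Dl : ℝ := ∑ k, M 1 i k * w k with hDl
  have hDten : Tendsto (fun j => ∑ k, M 1 i k * |U (j+1+1) k|) atTop (nhds Dl) := by
    rw [hDl]
    exact tendsto_finset_sum _ fun k _ => (hwten k).const_mul (M 1 i k)
  have hDlpos : 0 < Dl := by
    have h1 : M 1 i k₀ * w k₀ ≤ ∑ k, M 1 i k * w k := by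
      refine Finset.single_le_sum (f := fun k => M 1 i k * w k) (fun k _ => ?_) (Finset.mem_univ k₀)
      show 0 ≤ M 1 i k * w k
      rcases M1BIN i k with h | h
      · rw [h, zero_mul]
      · rw [h, one_mul]; exact wnn k
    calc 0 < w k₀ := by rw [hwk₀]; exact hU2pos
      _ = M 1 i k₀ * w k₀ := by rw [hk₀i, one_mul]
      _ ≤ Dl := by rw [hDl]; exact h1
  have hlamten : Tendsto (fun j => lam (j+1+1) i) atTop (nhds (s i / Dl)) := by
    have h := Tendsto.div (tendsto_const_nhds (x := s i)) hDten (ne_of_gt hDlpos)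
    exact h.congr fun j => (LAMF (j+1) i).symm
  refine ⟨fun k => (s i / Dl) * (M 1 i k * (Real.sign (U 1 k) * w k)), ?_⟩
  rw [tendsto_pi_nhds]
  intro k
  have hform : ∀ j : ℕ, Δ (j+1+1) i k = lam (j+1+1) i * (M 1 i k * U (j+1+1) k) := by
    intro j
    rw [hstep (j+1) i k, (Q (j+1)).1 i k]
  have h2 : Tendsto (fun j => Δ (j+1+1) i k) atTop
      (nhds ((s i / Dl) * (M 1 i k * (Real.sign (U 1 k) * w k)))) :=
    (hlamten.mul ((hUten k).const_mul (M 1 i k))).congr fun j => (hform j).symm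
  have h1 : Tendsto (fun j : ℕ => Δ (j+1) i k) atTop
      (nhds ((s i / Dl) * (M 1 i k * (Real.sign (U 1 k) * w k)))) :=
    (tendsto_add_atTop_iff_nat (f := fun j : ℕ => Δ (j+1) i k) 1).mp h2
  exact (tendsto_add_atTop_iff_nat (f := fun j : ℕ => Δ j i k) 1).mp h1
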